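/- Let p be a prime with p ≡ -1 (mod 12). Define the quadratic residue codes D₁, D₂, E₁, E₂ of length p over R = ℤ₉[u]/(u²-u) as the ideals generated by the corresponding idempotents (depending on r mod 3 where p = 12r-1). Then |D₁| = |D₂| = 9^{p+1} and |E₁| = |E₂| = 9^{p-1}. -/

import Mathlib

open Polynomial

noncomputable section

/-- The ring `R = ℤ₉[u]/(u² - u)`. -/
abbrev R9 : Type := Polynomial (ZMod 9) ⧸ Ideal.span {(X : Polynomial (ZMod 9)) ^ 2 - X}

instance : CommRing R9 := Ideal.Quotient.commRing _

/-- The element `u` of `R`, the image of `X`. -/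
def uu : R9 := Ideal.Quotient.mk _ (X : Polynomial (ZMod 9))

/-- The canonical embedding `ℤ₉ → R`. -/
def ι : ZMod 9 →+* R9 :=
  (Ideal.Quotient.mk _).comp (Polynomial.C : ZMod 9 →+* Polynomial (ZMod 9))
/-- The quotient ring `R[X]/(Xⁿ - 1)`. -/
abbrev Rn (n : ℕ) : Type := Polynomial R9 ⧸ Ideal.span {(X : Polynomial R9) ^ n - 1}

/-- The constants embedding `R → R[X]/(Xⁿ-1)`. -/
def ofR (n : ℕ) : R9 →+* Rn n :=
  (Ideal.Quotient.mk _).comp (Polynomial.C : R9 →+* Polynomial R9)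

/-- The image of `X` in `R[X]/(Xⁿ-1)`. -/
def xbar (n : ℕ) : Rn n := Ideal.Quotient.mk _ (X : Polynomial R9)

/-- A word `c ∈ Rⁿ` viewed as the element `Σ cᵢ Xⁱ` of `R[X]/(Xⁿ-1)`. -/
def toPoly (n : ℕ) (c : Fin n → R9) : Rn n :=
  ∑ i, ofR n (c i) * xbar n ^ (i : ℕ)

/-- The ring endomorphism of `R[X]/(Xⁿ-1)` induced by `X ↦ X^{n-1} = X⁻¹`. -/
def invX (n : ℕ) : Rn n →+* Rn n :=
  Ideal.Quotient.lift _ (Polynomial.eval₂RingHom (ofR n) (xbar n ^ (n - 1)))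
    (by
      intro a ha
      have hx : xbar n ^ n = 1 := by
        rw [xbar, ← map_pow, ← map_one (Ideal.Quotient.mk _),
          Ideal.Quotient.mk_eq_mk_iff_sub_mem]
        exact Ideal.subset_span rfl
      have h : Ideal.span {(X : Polynomial R9) ^ n - 1} ≤
          RingHom.ker (Polynomial.eval₂RingHom (ofR n) (xbar n ^ (n - 1))) := by
        rw [Ideal.span_le, Set.singleton_subset_iff]
        simp only [SetLike.mem_coe, RingHom.mem_ker, map_sub, map_pow, map_one,
          Polynomial.coe_eval₂RingHom, Polynomial.eval₂_X]
        rw [← pow_mul, Nat.mul_comm, pow_mul, hx]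
        exact sub_eq_zero.mpr (one_pow (M := Rn n) _)
      exact h ha)

/-- The Euclidean dual of the cyclic code given by an ideal of `R[X]/(Xⁿ-1)`. -/
def dualCode (n : ℕ) (J : Ideal (Rn n)) : Set (Fin n → R9) :=
  {x | ∀ c : Fin n → R9, toPoly n c ∈ J → ∑ i, x i * c i = 0}

/-- The cyclic shift. -/
def shift {α : Type*} {n : ℕ} [NeZero n] (c : Fin n → α) : Fin n → α :=
  fun i => c (i - 1)

open scoped Classical

/-- `Q(X) = Σ_{i ∈ Q_p} Xⁱ`, the sum over nonzero quadratic residues mod `p`,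
as an element of `R[X]/(X^p - 1)`. -/
def Qpoly (p : ℕ) [Fact p.Prime] : Rn p :=
  ∑ i : ZMod p, if i ≠ 0 ∧ IsSquare i then xbar p ^ i.val else 0

/-- `N(X) = Σ_{i ∈ N_p} Xⁱ`, the sum over quadratic non-residues mod `p`. -/
def Npoly (p : ℕ) [Fact p.Prime] : Rn p :=
  ∑ i : ZMod p, if i ≠ 0 ∧ ¬ IsSquare i then xbar p ^ i.val else 0

/-- The image of `u` as a constant in `R[X]/(X^p-1)`. -/
def uP (p : ℕ) : Rn p := ofR p uu

/-- Generating idempotent of the quadratic residue code `D₁` (case split on `r mod 3`,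
where `p = 12r - 1`). -/
def D1gen (p : ℕ) [Fact p.Prime] : Rn p :=
  let r := (p + 1) / 12
  if r % 3 = 0 then uP p * (8 * Qpoly p) + (1 - uP p) * (8 * Npoly p)
  else if r % 3 = 1 then
    uP p * (3 + 6 * Qpoly p + 8 * Npoly p) + (1 - uP p) * (3 + 6 * Npoly p + 8 * Qpoly p)
  else uP p * (6 + 3 * Qpoly p + 8 * Npoly p) + (1 - uP p) * (6 + 3 * Npoly p + 8 * Qpoly p)

/-- Generating idempotent of the quadratic residue code `D₂`. -/
def D2gen (p : ℕ) [Fact p.Prime] : Rn p :=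
  let r := (p + 1) / 12
  if r % 3 = 0 then uP p * (8 * Npoly p) + (1 - uP p) * (8 * Qpoly p)
  else if r % 3 = 1 then
    uP p * (3 + 6 * Npoly p + 8 * Qpoly p) + (1 - uP p) * (3 + 6 * Qpoly p + 8 * Npoly p)
  else uP p * (6 + 3 * Npoly p + 8 * Qpoly p) + (1 - uP p) * (6 + 3 * Qpoly p + 8 * Npoly p)

/-- Generating idempotent of the quadratic residue code `E₁`. -/
def E1gen (p : ℕ) [Fact p.Prime] : Rn p :=
  let r := (p + 1) / 12
  if r % 3 = 0 then uP p * (1 + Npoly p) + (1 - uP p) * (1 + Qpoly p)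
  else if r % 3 = 1 then
    uP p * (7 + Qpoly p + 3 * Npoly p) + (1 - uP p) * (7 + Npoly p + 3 * Qpoly p)
  else uP p * (4 + Qpoly p + 6 * Npoly p) + (1 - uP p) * (4 + Npoly p + 6 * Qpoly p)

/-- Generating idempotent of the quadratic residue code `E₂`. -/
def E2gen (p : ℕ) [Fact p.Prime] : Rn p :=
  let r := (p + 1) / 12
  if r % 3 = 0 then uP p * (1 + Qpoly p) + (1 - uP p) * (1 + Npoly p)
  else if r % 3 = 1 then
    uP p * (7 + Npoly p + 3 * Qpoly p) + (1 - uP p) * (7 + Qpoly p + 3 * Npoly p)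
  else uP p * (4 + Npoly p + 6 * Qpoly p) + (1 - uP p) * (4 + Qpoly p + 6 * Npoly p)


set_option linter.unusedSectionVars false
set_option maxHeartbeats 1000000
open Finset

section IdemCard
variable {A : Type*} [CommRing A]

lemma span_mul_mem {e : A} (z : A) (hz : z ∈ Ideal.span {e}) (h : e * e = e) : e * z = z := by
  rw [Ideal.mem_span_singleton] at hz
  obtain ⟨c, rfl⟩ := hz
  rw [← mul_assoc, h]

lemma card_span_add_of_orth {e₁ e₂ : A} (h1 : e₁ * e₁ = e₁) (h2 : e₂ * e₂ = e₂)
    (h12 : e₁ * e₂ = 0) :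
    Nat.card (Ideal.span {e₁ + e₂} : Ideal A) =
      Nat.card (Ideal.span {e₁} : Ideal A) * Nat.card (Ideal.span {e₂} : Ideal A) := by
  have h21 : e₂ * e₁ = 0 := by rw [mul_comm]; exact h12
  let f : (Ideal.span {e₁} : Ideal A) × (Ideal.span {e₂} : Ideal A) →
      (Ideal.span {e₁ + e₂} : Ideal A) := fun ab =>
    ⟨ab.1.1 + ab.2.1, by
      obtain ⟨c, hc⟩ := Ideal.mem_span_singleton.mp ab.1.2
      obtain ⟨d, hd⟩ := Ideal.mem_span_singleton.mp ab.2.2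
      refine Ideal.mem_span_singleton.mpr ⟨e₁ * c + e₂ * d, ?_⟩
      rw [hc, hd]
      linear_combination (-c) * h1 + (-d) * h2 + (-(c+d)) * h12⟩
  have hbij : Function.Bijective f := by
    constructor
    · rintro ⟨⟨a, ha⟩, ⟨b, hb⟩⟩ ⟨⟨a', ha'⟩, ⟨b', hb'⟩⟩ hff
      have h : a + b = a' + b' := congrArg Subtype.val hff
      have ha1 : e₁ * a = a := span_mul_mem a ha h1
      have ha1' : e₁ * a' = a' := span_mul_mem a' ha' h1
      have hb1 : e₂ * b = b := span_mul_mem b hb h2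
      have hb1' : e₂ * b' = b' := span_mul_mem b' hb' h2
      have hb0 : e₁ * b = 0 := by
        obtain ⟨c, rfl⟩ := Ideal.mem_span_singleton.mp hb
        rw [← mul_assoc, h12, zero_mul]
      have hb0' : e₁ * b' = 0 := by
        obtain ⟨c, rfl⟩ := Ideal.mem_span_singleton.mp hb'
        rw [← mul_assoc, h12, zero_mul]
      have haa : a = a' := by
        have := congrArg (e₁ * ·) h
        simpa [mul_add, ha1, ha1', hb0, hb0'] using this
      have hbb : b = b' := by
        have : a + b = a + b' := by rw [h, haa]
        exact add_left_cancel this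
      simp [Prod.ext_iff, Subtype.ext_iff, haa, hbb]
    · rintro ⟨z, hz⟩
      obtain ⟨c, rfl⟩ := Ideal.mem_span_singleton.mp hz
      refine ⟨⟨⟨e₁ * c, Ideal.mem_span_singleton.mpr ⟨c, by ring⟩⟩,
        ⟨e₂ * c, Ideal.mem_span_singleton.mpr ⟨c, by ring⟩⟩⟩, ?_⟩
      simp only [f, Subtype.ext_iff]
      ring
  calc Nat.card (Ideal.span {e₁ + e₂} : Ideal A)
      = Nat.card ((Ideal.span {e₁} : Ideal A) × (Ideal.span {e₂} : Ideal A)) :=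
        (Nat.card_congr (Equiv.ofBijective f hbij)).symm
    _ = _ := Nat.card_prod _ _

lemma card_span_idem_mul {e : A} (he : e * e = e) :
    Nat.card (Ideal.span {e} : Ideal A) * Nat.card (Ideal.span {1 - e} : Ideal A) =
      Nat.card A := by
  have h2 : (1 - e) * (1 - e) = 1 - e := by ring_nf; rw [show e^2 = e*e by ring, he]; ring
  have h12 : e * (1 - e) = 0 := by rw [mul_sub, mul_one, he, sub_self]
  have := (card_span_add_of_orth he h2 h12).symm
  rw [add_sub_cancel] at this
  rw [Ideal.span_singleton_one] at this
  rw [this]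
  exact Nat.card_congr (Equiv.ofBijective (fun a : (⊤ : Ideal A) => a.1)
    ⟨fun a b h => Subtype.ext h, fun a => ⟨⟨a, trivial⟩, rfl⟩⟩)
end IdemCard

lemma adjoinRoot_finite {R : Type*} [CommRing R] [Finite R] {g : Polynomial R} (hg : g.Monic) :
    Finite (AdjoinRoot g) := by
  classical
  cases nonempty_fintype R
  exact Finite.of_equiv _ (AdjoinRoot.powerBasis' hg).basis.equivFun.toEquiv.symm

lemma adjoinRoot_card {R : Type*} [CommRing R] [Finite R] {g : Polynomial R} (hg : g.Monic) :
    Nat.card (AdjoinRoot g) = Nat.card R ^ g.natDegree := by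
  classical
  cases nonempty_fintype R
  rw [Nat.card_congr (AdjoinRoot.powerBasis' hg).basis.equivFun.toEquiv, Nat.card_fun]
  simp [AdjoinRoot.powerBasis']


instance : Nontrivial (ZMod 9) := ⟨0, 1, by decide⟩

lemma monicXXsub : ((X : Polynomial (ZMod 9)) ^ 2 - X).Monic := by
  apply Polynomial.monic_X_pow_sub
  rw [Polynomial.degree_X]
  norm_num

instance R9fin : Finite R9 := adjoinRoot_finite (g := (X : Polynomial (ZMod 9)) ^ 2 - X) monicXXsub

lemma hdegXX : ((X : Polynomial (ZMod 9)) ^ 2 - X).natDegree = 2 := by compute_degree!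

instance R9nontriv : Nontrivial R9 := by
  apply Ideal.Quotient.nontrivial_iff.mpr
  intro h
  have h1 : (1 : Polynomial (ZMod 9)) ∈ Ideal.span {(X : Polynomial (ZMod 9)) ^ 2 - X} := by
    rw [h]; trivial
  have hdvd := Ideal.mem_span_singleton.mp h1
  have := monicXXsub.eq_one_of_isUnit (isUnit_of_dvd_one hdvd)
  have h2 := hdegXX
  rw [this] at h2
  simp at h2

lemma R9card : Nat.card R9 = 81 := by
  have := adjoinRoot_card (g := (X : Polynomial (ZMod 9)) ^ 2 - X) monicXXsub
  rw [hdegXX] at this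
  simp [Nat.card_zmod] at this; exact this

lemma monicXn {n : ℕ} (hn : n ≠ 0) : ((X : Polynomial R9) ^ n - 1).Monic := by
  have := Polynomial.monic_X_pow_sub_C (1 : R9) hn
  simpa using this

instance Rnfin (n : ℕ) [NeZero n] : Finite (Rn n) :=
  adjoinRoot_finite (g := (X : Polynomial R9) ^ n - 1) (monicXn (NeZero.ne n))

lemma Rncard (n : ℕ) (hn : n ≠ 0) : Nat.card (Rn n) = 81 ^ n := by
  have := adjoinRoot_card (g := (X : Polynomial R9) ^ n - 1) (monicXn hn)
  have hdeg : ((X : Polynomial R9) ^ n - 1).natDegree = n := by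
    rw [show (1 : Polynomial R9) = C 1 by simp, Polynomial.natDegree_X_pow_sub_C]
  rw [hdeg, R9card] at this
  exact this
def Jel (p : ℕ) : Rn p := ∑ i ∈ Finset.range p, (Ideal.Quotient.mk _ (X : Polynomial R9)) ^ i

section Struct
variable (p : ℕ)

local notation "xb" => (Ideal.Quotient.mk (Ideal.span {(X : Polynomial R9) ^ p - 1}) (X : Polynomial R9))

lemma h9R9 : (9 : R9) = 0 := by
  have h := map_natCast ((Ideal.Quotient.mk (Ideal.span {(X : Polynomial (ZMod 9)) ^ 2 - X})).comp
    (Polynomial.C : ZMod 9 →+* Polynomial (ZMod 9))) 9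
  rw [ZMod.natCast_self, map_zero] at h
  rw [show (9 : R9) = ((9:ℕ) : R9) by norm_cast, h]

lemma h9Rn : (9 : Rn p) = 0 := by
  rw [show (9 : Rn p) = ((9:ℕ) : Rn p) by norm_cast, ← map_natCast (ofR p) 9,
    show ((9:ℕ) : R9) = 9 by norm_cast, h9R9, map_zero]

lemma xb_pow_p : xb ^ p = 1 := by
  rw [← map_pow, ← map_one (Ideal.Quotient.mk _), Ideal.Quotient.mk_eq_mk_iff_sub_mem]
  exact Ideal.subset_span rfl

lemma xb_pow_mod (m : ℕ) : xb ^ m = xb ^ (m % p) := by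
  conv_lhs => rw [← Nat.div_add_mod m p]
  rw [pow_add, pow_mul, xb_pow_p, one_pow (M := Rn p), one_mul]

lemma xb_mul_J : xb * Jel p = Jel p := by
  have h := geom_sum_mul xb p
  rw [xb_pow_p p, sub_self] at h
  have h' : Jel p * (xb - 1) = 0 := h
  linear_combination h'

lemma xb_pow_mul_J (n : ℕ) : xb ^ n * Jel p = Jel p := by
  induction n with
  | zero => simp
  | succ n ih =>
    have h : xb ^ (n+1) * Jel p = xb ^ n * (xb * Jel p) := by ring
    rw [h, xb_mul_J p, ih]

/-- Evaluation at 1 -/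
def ev1 : Rn p →+* R9 :=
  Ideal.Quotient.lift _ (Polynomial.eval₂RingHom (RingHom.id R9) 1)
    (by
      intro a ha
      have h : Ideal.span {(X : Polynomial R9) ^ p - 1} ≤
          RingHom.ker (Polynomial.eval₂RingHom (RingHom.id R9) (1 : R9)) := by
        rw [Ideal.span_le, Set.singleton_subset_iff]
        simp
      exact h ha)

lemma ev1_ofR (a : R9) : ev1 p (ofR p a) = a := by
  show Polynomial.eval₂RingHom (RingHom.id R9) 1 (Polynomial.C a) = a
  simp [ev1, ofR, Ideal.Quotient.lift_mk]

lemma ev1_xb : ev1 p xb = 1 := by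
  show Polynomial.eval₂RingHom (RingHom.id R9) 1 (X : Polynomial R9) = 1
  simp [ev1, Ideal.Quotient.lift_mk]

lemma absorb (f : Rn p) : f * Jel p = ofR p (ev1 p f) * Jel p := by
  obtain ⟨g, rfl⟩ := Ideal.Quotient.mk_surjective f
  induction g using Polynomial.induction_on' with
  | add f g hf hg =>
    rw [map_add, add_mul, hf, hg, map_add, map_add, add_mul]
  | monomial n a =>
    rw [← Polynomial.C_mul_X_pow_eq_monomial, map_mul, map_pow]
    have h1 : (Ideal.Quotient.mk _ (Polynomial.C a) : Rn p) = ofR p a := rfl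
    rw [h1, mul_assoc, xb_pow_mul_J p, map_mul, map_pow, ev1_ofR p, ev1_xb p, one_pow, mul_one]

lemma J_inj (hp : p ≠ 0) (s : R9) (hs : ofR p s * Jel p = 0) : s = 0 := by
  have hJ : Jel p = Ideal.Quotient.mk _ (∑ i ∈ Finset.range p, (X : Polynomial R9) ^ i) := by
    rw [map_sum]
    exact Finset.sum_congr rfl fun i _ => (map_pow _ _ _).symm
  set t : Polynomial R9 := ∑ i ∈ Finset.range p, (X : Polynomial R9) ^ i with ht
  have h0 : (Ideal.Quotient.mk _ (Polynomial.C s * t) : Rn p) = 0 := by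
    rw [map_mul]; rw [hJ] at hs; exact hs
  rw [Ideal.Quotient.eq_zero_iff_mem, Ideal.mem_span_singleton] at h0
  obtain ⟨h, heq⟩ := h0
  have hmonic := monicXn hp
  have hCst : Polynomial.C s * t = 0 := by
    by_contra hne
    have hh : h ≠ 0 := by rintro rfl; rw [mul_zero] at heq; exact hne heq
    have hdeg : (((X : Polynomial R9) ^ p - 1) * h).natDegree = p + h.natDegree := by
      rw [Polynomial.natDegree_mul' (by
        rw [hmonic.leadingCoeff, one_mul]
        exact Polynomial.leadingCoeff_ne_zero.mpr hh)]
      congr 1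
      rw [show (1 : Polynomial R9) = Polynomial.C 1 by simp, Polynomial.natDegree_X_pow_sub_C]
    have hle : (Polynomial.C s * t).natDegree ≤ p - 1 := by
      refine le_trans (Polynomial.natDegree_mul_le) ?_
      simp only [Polynomial.natDegree_C, zero_add]
      refine Polynomial.natDegree_sum_le_of_forall_le _ _ (fun i hi => ?_)
      simp only [Polynomial.natDegree_X_pow]
      exact Nat.le_sub_one_of_lt (Finset.mem_range.mp hi)
    rw [heq, hdeg] at hle
    omega
  have : s = (Polynomial.C s * t).coeff 0 := by
    rw [Polynomial.coeff_C_mul, ht]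
    rw [Polynomial.finset_sum_coeff]
    have : ∀ i ∈ Finset.range p, ((X : Polynomial R9) ^ i).coeff 0 = if i = 0 then 1 else 0 := by
      intro i _
      rw [Polynomial.coeff_X_pow]
      simp [eq_comm]
    rw [Finset.sum_congr rfl this, Finset.sum_ite_eq' (Finset.range p) 0 (fun _ => (1:R9))]
    simp [Finset.mem_range, Nat.pos_of_ne_zero hp]
  rw [this, hCst]
  simp

lemma card_span_cJ (hp : p ≠ 0) (c0 : R9) (hc : IsUnit c0) :
    Nat.card (Ideal.span {ofR p c0 * Jel p} : Ideal (Rn p)) = 81 := by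
  have hinj : ∀ s : R9, ofR p s * (ofR p c0 * Jel p) = 0 → s = 0 := by
    intro s hs
    have : ofR p (s * c0) * Jel p = 0 := by rw [map_mul, mul_assoc]; exact hs
    have h0 := J_inj p hp _ this
    obtain ⟨v, hv⟩ := hc.exists_right_inv
    calc s = s * (c0 * v) := by rw [hv, mul_one]
    _ = (s * c0) * v := by ring
    _ = 0 := by rw [h0, zero_mul]
  let f : R9 → (Ideal.span {ofR p c0 * Jel p} : Ideal (Rn p)) := fun s =>
    ⟨ofR p s * (ofR p c0 * Jel p),
      Ideal.mem_span_singleton.mpr ⟨ofR p s, by ring⟩⟩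
  have hbij : Function.Bijective f := by
    constructor
    · intro a b hab
      have h : ofR p a * (ofR p c0 * Jel p) = ofR p b * (ofR p c0 * Jel p) :=
        congrArg Subtype.val hab
      have h2 : ofR p (a - b) * (ofR p c0 * Jel p) = 0 := by
        rw [map_sub]; linear_combination h
      exact sub_eq_zero.mp (hinj _ h2)
    · rintro ⟨z, hz⟩
      obtain ⟨g, hg⟩ := (Ideal.mem_span_singleton (α := Rn p)).mp hz
      refine ⟨ev1 p g, ?_⟩
      simp only [f, Subtype.ext_iff]
      rw [hg]
      calc ofR p (ev1 p g) * (ofR p c0 * Jel p) = (g * Jel p) * ofR p c0 := by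
            rw [absorb p g]; ring
      _ = ofR p c0 * Jel p * g := by ring
  have : Nat.card (Ideal.span {ofR p c0 * Jel p} : Ideal (Rn p)) = Nat.card R9 :=
    (Nat.card_congr (Equiv.ofBijective f hbij)).symm
  rw [this, R9card]
end Struct

section Count
variable (p : ℕ) [Fact p.Prime]

local notation "χ" => quadraticChar (ZMod p)

lemma hpodd (hp12 : p % 12 = 11) : p % 2 = 1 := by omega
lemma hp43 (hp12 : p % 12 = 11) : p % 4 = 3 := by omega

lemma hchar2 (hp12 : p % 12 = 11) : ringChar (ZMod p) ≠ 2 := by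
  rw [ZMod.ringChar_zmod_n]; omega

lemma hχm1 (hp12 : p % 12 = 11) : χ (-1) = -1 := by
  rw [quadraticChar_neg_one_iff_not_isSquare, ZMod.exists_sq_eq_neg_one_iff]
  simp [hp43 p hp12]

lemma hχinv (a : ZMod p) : χ a⁻¹ = χ a := by
  by_cases ha : a = 0
  · simp [ha]
  · have h := map_mul χ a a⁻¹
    rw [mul_inv_cancel₀ ha, map_one] at h
    rcases quadraticChar_dichotomy (F := ZMod p) ha with h1 | h1 <;>
      rw [h1] at h ⊢ <;> linarith

/-- number of nonzero squares -/
lemma card_QS_add_NS :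
    (univ.filter fun a : ZMod p => χ a = 1).card
      + (univ.filter fun a : ZMod p => χ a = -1).card = p - 1 := by
  classical
  rw [← Finset.card_union_of_disjoint (by
    rw [Finset.disjoint_filter]
    intro a _ h1 h2
    rw [h1] at h2
    norm_num at h2)]
  have h : (univ.filter fun a : ZMod p => χ a = 1) ∪ (univ.filter fun a : ZMod p => χ a = -1)
      = univ.filter (fun a : ZMod p => a ≠ 0) := by
    ext a
    simp only [Finset.mem_union, Finset.mem_filter, Finset.mem_univ, true_and]
    constructor
    · rintro (h | h) rfl <;> rw [quadraticChar_zero] at h <;> norm_num at h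
    · intro ha
      exact quadraticChar_dichotomy ha
  rw [h]
  rw [Finset.filter_ne' univ 0, Finset.card_erase_of_mem (Finset.mem_univ 0)]
  simp [ZMod.card p]

lemma card_QS_eq_NS (hp12 : p % 12 = 11) :
    (univ.filter fun a : ZMod p => χ a = 1).card
      = (univ.filter fun a : ZMod p => χ a = -1).card := by
  classical
  obtain ⟨t, ht⟩ := quadraticChar_exists_neg_one (hchar2 p hp12)
  have ht0 : t ≠ 0 := fun h => by rw [h, quadraticChar_zero] at ht; norm_num at ht
  refine Finset.card_nbij' (fun a => t * a) (fun b => t⁻¹ * b) ?_ ?_ ?_ ?_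
  · intro a ha
    simp only [Finset.mem_coe, Finset.mem_filter, Finset.mem_univ, true_and] at ha ⊢
    rw [map_mul, ht, ha]; ring
  · intro b hb
    simp only [Finset.mem_coe, Finset.mem_filter, Finset.mem_univ, true_and] at hb ⊢
    rw [map_mul, hχinv, ht, hb]; ring
  · intro a _; field_simp
  · intro b _; field_simp

lemma card_QS (hp12 : p % 12 = 11) : (univ.filter fun a : ZMod p => χ a = 1).card = (p-1)/2 := by
  have h1 := card_QS_add_NS p
  have h2 := card_QS_eq_NS p hp12
  omega

lemma card_NS (hp12 : p % 12 = 11) : (univ.filter fun a : ZMod p => χ a = -1).card = (p-1)/2 := by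
  have h1 := card_QS_add_NS p
  have h2 := card_QS_eq_NS p hp12
  omega

-- cyclotomic counts at k = 1
lemma cyc_AA_eq_AB (hp12 : p % 12 = 11) :
    (univ.filter fun a : ZMod p => χ a = 1 ∧ χ (1 - a) = 1).card
      = (univ.filter fun a : ZMod p => χ a = 1 ∧ χ (1 - a) = -1).card := by
  classical
  have key : ∀ a : ZMod p, a ≠ 0 → χ (1 - a⁻¹) = - (χ (1-a) * χ a) := by
    intro a ha
    have h : (1 : ZMod p) - a⁻¹ = (-1) * ((1 - a) * a⁻¹) := by field_simp; ring
    rw [h, map_mul, map_mul, hχm1 p hp12, hχinv]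
    ring
  refine Finset.card_nbij' (fun a => a⁻¹) (fun b => b⁻¹) ?_ ?_ ?_ ?_
  · intro a ha
    simp only [Finset.mem_coe, Finset.mem_filter, Finset.mem_univ, true_and] at ha ⊢
    obtain ⟨ha1, ha2⟩ := ha
    have ha0 : a ≠ 0 := fun h => by rw [h, quadraticChar_zero] at ha1; norm_num at ha1
    refine ⟨by rw [hχinv, ha1], ?_⟩
    rw [key a ha0, ha1, ha2]; ring
  · intro b hb
    simp only [Finset.mem_coe, Finset.mem_filter, Finset.mem_univ, true_and] at hb ⊢
    obtain ⟨hb1, hb2⟩ := hb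
    have hb0 : b ≠ 0 := fun h => by rw [h, quadraticChar_zero] at hb1; norm_num at hb1
    refine ⟨by rw [hχinv, hb1], ?_⟩
    rw [key b hb0, hb1, hb2]; ring
  · intro a _; simp
  · intro b _; simp

lemma cyc_AB_eq_BA :
    (univ.filter fun a : ZMod p => χ a = 1 ∧ χ (1 - a) = -1).card
      = (univ.filter fun a : ZMod p => χ a = -1 ∧ χ (1 - a) = 1).card := by
  classical
  refine Finset.card_nbij' (fun a => 1 - a) (fun b => 1 - b) ?_ ?_ ?_ ?_
  · intro a ha
    simp only [Finset.mem_coe, Finset.mem_filter, Finset.mem_univ, true_and] at ha ⊢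
    exact ⟨ha.2, by rw [sub_sub_cancel]; exact ha.1⟩
  · intro b hb
    simp only [Finset.mem_coe, Finset.mem_filter, Finset.mem_univ, true_and] at hb ⊢
    exact ⟨hb.2, by rw [sub_sub_cancel]; exact hb.1⟩
  · intro a _; simp
  · intro b _; simp

lemma cyc_AA_add_AB (hp12 : p % 12 = 11) :
    (univ.filter fun a : ZMod p => χ a = 1 ∧ χ (1 - a) = 1).card
      + (univ.filter fun a : ZMod p => χ a = 1 ∧ χ (1 - a) = -1).card = (p-1)/2 - 1 := by
  classical
  rw [← Finset.card_union_of_disjoint (by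
    rw [Finset.disjoint_filter]
    intro a _ h1 h2
    rw [h1.2] at h2
    exact absurd h2.2.symm (by norm_num))]
  have h : (univ.filter fun a : ZMod p => χ a = 1 ∧ χ (1 - a) = 1)
      ∪ (univ.filter fun a : ZMod p => χ a = 1 ∧ χ (1 - a) = -1)
      = (univ.filter fun a : ZMod p => χ a = 1).erase 1 := by
    ext a
    simp only [Finset.mem_union, Finset.mem_filter, Finset.mem_univ, true_and,
      Finset.mem_erase]
    constructor
    · rintro (⟨h1, h2⟩ | ⟨h1, h2⟩) <;>
      · refine ⟨fun h => ?_, h1⟩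
        rw [h, sub_self, quadraticChar_zero] at h2
        norm_num at h2
    · rintro ⟨ha1, ha⟩
      have : (1 : ZMod p) - a ≠ 0 := fun h => ha1 (by linear_combination -h)
      rcases quadraticChar_dichotomy this with h | h
      · exact Or.inl ⟨ha, h⟩
      · exact Or.inr ⟨ha, h⟩
  rw [h, Finset.card_erase_of_mem (by
    simp only [Finset.mem_filter, Finset.mem_univ, true_and, map_one]), card_QS p hp12]

lemma cyc_BA_add_BB (hp12 : p % 12 = 11) :
    (univ.filter fun a : ZMod p => χ a = -1 ∧ χ (1 - a) = 1).card
      + (univ.filter fun a : ZMod p => χ a = -1 ∧ χ (1 - a) = -1).card = (p-1)/2 := by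
  classical
  rw [← Finset.card_union_of_disjoint (by
    rw [Finset.disjoint_filter]
    intro a _ h1 h2
    rw [h1.2] at h2
    exact absurd h2.2.symm (by norm_num))]
  have h : (univ.filter fun a : ZMod p => χ a = -1 ∧ χ (1 - a) = 1)
      ∪ (univ.filter fun a : ZMod p => χ a = -1 ∧ χ (1 - a) = -1)
      = univ.filter fun a : ZMod p => χ a = -1 := by
    ext a
    simp only [Finset.mem_union, Finset.mem_filter, Finset.mem_univ, true_and]
    constructor
    · rintro (⟨h1, _⟩ | ⟨h1, _⟩) <;> exact h1
    · intro ha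
      have ha1 : a ≠ 1 := fun h => by rw [h, map_one] at ha; norm_num at ha
      have : (1 : ZMod p) - a ≠ 0 := fun h => ha1 (by linear_combination -h)
      rcases quadraticChar_dichotomy this with h | h
      · exact Or.inl ⟨ha, h⟩
      · exact Or.inr ⟨ha, h⟩
  rw [h, card_NS p hp12]
end Count
section Count2
open Finset
variable (p : ℕ) [Fact p.Prime]
local notation "χ" => quadraticChar (ZMod p)

lemma count_shift (k : ZMod p) (hk : k ≠ 0) (s₁ s₂ : ℤ) :
    (univ.filter fun a : ZMod p => χ a = s₁ ∧ χ (k - a) = s₂).card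
      = (univ.filter fun b : ZMod p => χ b = χ k * s₁ ∧ χ (1 - b) = χ k * s₂).card := by
  classical
  have hkk : χ k * χ k = 1 := by
    have h := quadraticChar_sq_one (F := ZMod p) hk
    rwa [sq] at h
  refine Finset.card_nbij' (fun a => k⁻¹ * a) (fun b => k * b) ?_ ?_ ?_ ?_
  · intro a ha
    simp only [Finset.mem_coe, Finset.mem_filter, Finset.mem_univ, true_and] at ha ⊢
    obtain ⟨h1, h2⟩ := ha
    constructor
    · rw [map_mul, hχinv, h1]
    · have : (1 : ZMod p) - k⁻¹ * a = k⁻¹ * (k - a) := by field_simp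
      rw [this, map_mul, hχinv, h2]
  · intro b hb
    simp only [Finset.mem_coe, Finset.mem_filter, Finset.mem_univ, true_and] at hb ⊢
    obtain ⟨h1, h2⟩ := hb
    constructor
    · rw [map_mul, h1, ← mul_assoc, hkk, one_mul]
    · have : k - k * b = k * (1 - b) := by ring
      rw [this, map_mul, h2, ← mul_assoc, hkk, one_mul]
  · intro a _; field_simp
  · intro b _; field_simp

lemma count_QQ (hp12 : p % 12 = 11) (k : ZMod p) (hk : k ≠ 0) :
    (univ.filter fun a : ZMod p => χ a = 1 ∧ χ (k - a) = 1).card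
      = if χ k = 1 then 3 * ((p+1)/12) - 1 else 3 * ((p+1)/12) := by
  have hAB := cyc_AA_eq_AB p hp12
  have hBA := cyc_AB_eq_BA p
  have hAAB := cyc_AA_add_AB p hp12
  have hBAB := cyc_BA_add_BB p hp12
  rw [count_shift p k hk]
  rcases quadraticChar_dichotomy (F := ZMod p) hk with h | h
  · rw [h, if_pos rfl]
    simp only [one_mul]
    omega
  · rw [h, if_neg (by norm_num)]
    simp only [neg_one_mul, neg_neg]
    omega

lemma count_NN (hp12 : p % 12 = 11) (k : ZMod p) (hk : k ≠ 0) :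
    (univ.filter fun a : ZMod p => χ a = -1 ∧ χ (k - a) = -1).card
      = if χ k = 1 then 3 * ((p+1)/12) else 3 * ((p+1)/12) - 1 := by
  have hAB := cyc_AA_eq_AB p hp12
  have hBA := cyc_AB_eq_BA p
  have hAAB := cyc_AA_add_AB p hp12
  have hBAB := cyc_BA_add_BB p hp12
  rw [count_shift p k hk]
  rcases quadraticChar_dichotomy (F := ZMod p) hk with h | h
  · rw [h, if_pos rfl]
    simp only [one_mul]
    omega
  · rw [h, if_neg (by norm_num)]
    simp only [neg_one_mul, neg_neg]
    omega

lemma count_QN (hp12 : p % 12 = 11) (k : ZMod p) (hk : k ≠ 0) :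
    (univ.filter fun a : ZMod p => χ a = 1 ∧ χ (k - a) = -1).card
      = 3 * ((p+1)/12) - 1 := by
  have hAB := cyc_AA_eq_AB p hp12
  have hBA := cyc_AB_eq_BA p
  have hAAB := cyc_AA_add_AB p hp12
  have hBAB := cyc_BA_add_BB p hp12
  rw [count_shift p k hk]
  rcases quadraticChar_dichotomy (F := ZMod p) hk with h | h
  · rw [h]
    simp only [one_mul]
    omega
  · rw [h]
    simp only [neg_one_mul, neg_neg]
    omega

lemma count_QQ0 (hp12 : p % 12 = 11) :
    (univ.filter fun a : ZMod p => χ a = 1 ∧ χ (0 - a) = 1).card = 0 := by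
  rw [Finset.card_eq_zero, Finset.filter_eq_empty_iff]
  intro a _
  rintro ⟨h1, h2⟩
  rw [zero_sub, show (-a : ZMod p) = (-1) * a by ring, map_mul, hχm1 p hp12, h1] at h2
  norm_num at h2

lemma count_NN0 (hp12 : p % 12 = 11) :
    (univ.filter fun a : ZMod p => χ a = -1 ∧ χ (0 - a) = -1).card = 0 := by
  rw [Finset.card_eq_zero, Finset.filter_eq_empty_iff]
  intro a _
  rintro ⟨h1, h2⟩
  rw [zero_sub, show (-a : ZMod p) = (-1) * a by ring, map_mul, hχm1 p hp12, h1] at h2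
  norm_num at h2

lemma count_QN0 (hp12 : p % 12 = 11) :
    (univ.filter fun a : ZMod p => χ a = 1 ∧ χ (0 - a) = -1).card = 6 * ((p+1)/12) - 1 := by
  have h : (univ.filter fun a : ZMod p => χ a = 1 ∧ χ (0 - a) = -1)
      = univ.filter fun a : ZMod p => χ a = 1 := by
    ext a
    simp only [Finset.mem_filter, Finset.mem_univ, true_and, and_iff_left_iff_imp]
    intro h1
    rw [zero_sub, show (-a : ZMod p) = (-1) * a by ring, map_mul, hχm1 p hp12, h1]
    norm_num
  rw [h, card_QS p hp12]
  omega

lemma fiber_card (s₁ s₂ : ℤ) (k : ZMod p) :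
    ((((univ.filter fun a : ZMod p => χ a = s₁)) ×ˢ ((univ.filter fun b : ZMod p => χ b = s₂))).filter
      fun ij => ij.1 + ij.2 = k).card
      = (univ.filter fun a : ZMod p => χ a = s₁ ∧ χ (k - a) = s₂).card := by
  classical
  refine Finset.card_nbij' (fun ij => ij.1) (fun a => (a, k - a)) ?_ ?_ ?_ ?_
  · intro ij hij
    simp only [Finset.mem_coe, Finset.mem_filter, Finset.mem_product, Finset.mem_univ,
      true_and] at hij ⊢
    obtain ⟨⟨h1, h2⟩, h3⟩ := hij
    exact ⟨h1, by rw [← h3]; simpa using h2⟩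
  · intro a ha
    simp only [Finset.mem_coe, Finset.mem_filter, Finset.mem_product, Finset.mem_univ,
      true_and] at ha ⊢
    exact ⟨⟨ha.1, ha.2⟩, by ring⟩
  · intro ij hij
    simp only [Finset.mem_coe, Finset.mem_filter] at hij
    have := hij.2
    ext
    · rfl
    · simp only []
      rw [← this]; ring
  · intro a _; rfl
end Count2


section Main
open Finset
variable (p : ℕ) [Fact p.Prime]
local notation "χ" => quadraticChar (ZMod p)

instance : NeZero p := ⟨(Fact.out : p.Prime).pos.ne'⟩

def xel (i : ZMod p) : Rn p := xbar p ^ i.val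

lemma xbar_pow_p : xbar p ^ p = 1 := xb_pow_p p
lemma xbar_pow_mod (m : ℕ) : xbar p ^ m = xbar p ^ (m % p) := xb_pow_mod p m
lemma Jel_xbar : Jel p = ∑ i ∈ Finset.range p, xbar p ^ i := rfl

lemma hxel_add (i j : ZMod p) : xel p (i + j) = xel p i * xel p j := by
  rw [xel, xel, xel, ZMod.val_add, ← xbar_pow_mod, pow_add]

lemma hxel_zero : xel p (0 : ZMod p) = 1 := by
  rw [xel, ZMod.val_zero, pow_zero]

lemma hQsum : Qpoly p = ∑ i ∈ univ.filter (fun a : ZMod p => χ a = 1), xel p i := by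
  rw [Qpoly, Finset.sum_filter]
  refine Finset.sum_congr rfl fun i _ => ?_
  by_cases h : χ i = 1
  · have hi0 : i ≠ 0 := fun h0 => by rw [h0, quadraticChar_zero] at h; norm_num at h
    rw [if_pos h, if_pos ⟨hi0, (quadraticChar_one_iff_isSquare hi0).mp h⟩]; rfl
  · rw [if_neg h, if_neg ?_]
    rintro ⟨hi0, hsq⟩
    exact h ((quadraticChar_one_iff_isSquare hi0).mpr hsq)

lemma hNsum : Npoly p = ∑ i ∈ univ.filter (fun a : ZMod p => χ a = -1), xel p i := by
  rw [Npoly, Finset.sum_filter]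
  refine Finset.sum_congr rfl fun i _ => ?_
  by_cases h : χ i = -1
  · have hi0 : i ≠ 0 := fun h0 => by rw [h0, quadraticChar_zero] at h; norm_num at h
    rw [if_pos h, if_pos ⟨hi0, quadraticChar_neg_one_iff_not_isSquare.mp h⟩]; rfl
  · rw [if_neg h, if_neg ?_]
    rintro ⟨hi0, hsq⟩
    exact h (quadraticChar_neg_one_iff_not_isSquare.mpr hsq)

lemma sum_split (g : ZMod p → Rn p) :
    ∑ k : ZMod p, g k = g 0 + (∑ k ∈ univ.filter (fun a : ZMod p => χ a = 1), g k
      + ∑ k ∈ univ.filter (fun a : ZMod p => χ a = -1), g k) := by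
  have hdis : Disjoint (univ.filter (fun a : ZMod p => χ a = 1))
      (univ.filter (fun a : ZMod p => χ a = -1)) := by
    rw [Finset.disjoint_filter]
    intro a _ h1 h2
    rw [h1] at h2; norm_num at h2
  have hsplit : univ.erase (0 : ZMod p)
      = univ.filter (fun a : ZMod p => χ a = 1) ∪ univ.filter (fun a : ZMod p => χ a = -1) := by
    ext a
    simp only [Finset.mem_erase, Finset.mem_univ, and_true, Finset.mem_union,
      Finset.mem_filter, true_and]
    constructor
    · intro ha; exact quadraticChar_dichotomy ha
    · rintro (h | h) rfl <;> rw [quadraticChar_zero] at h <;> norm_num at h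
  rw [← Finset.add_sum_erase univ g (Finset.mem_univ 0), hsplit, Finset.sum_union hdis]

lemma sum_mul_sum_fiber (S T : Finset (ZMod p)) :
    (∑ i ∈ S, xel p i) * (∑ j ∈ T, xel p j)
      = ∑ k : ZMod p, (((S ×ˢ T).filter fun ij => ij.1 + ij.2 = k).card) • xel p k := by
  classical
  rw [Finset.sum_mul_sum S T (fun i => xel p i) (fun j => xel p j), ← Finset.sum_product',
    ← Finset.sum_fiberwise_of_maps_to (g := fun ij : ZMod p × ZMod p => ij.1 + ij.2)
      (fun ij _ => Finset.mem_univ _) (fun ij => xel p ij.1 * xel p ij.2)]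
  refine Finset.sum_congr rfl fun k _ => ?_
  calc ∑ ij ∈ (S ×ˢ T).filter (fun ij => ij.1 + ij.2 = k), xel p ij.1 * xel p ij.2
      = ∑ ij ∈ (S ×ˢ T).filter (fun ij => ij.1 + ij.2 = k), xel p k := by
        refine Finset.sum_congr rfl fun ij hij => ?_
        obtain ⟨-, h⟩ := Finset.mem_filter.mp hij
        rw [← hxel_add p, h]
    _ = _ := Finset.sum_const _

lemma sum_count (c0 cq cn : ℕ) (f : ZMod p → ℕ) (hf0 : f 0 = c0)
    (hfq : ∀ k, χ k = 1 → f k = cq) (hfn : ∀ k, χ k = -1 → f k = cn) :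
    ∑ k : ZMod p, f k • xel p k = c0 • (1 : Rn p) + (cq • Qpoly p + cn • Npoly p) := by
  rw [sum_split p (fun k => f k • xel p k), hf0, hxel_zero p]
  congr 1
  congr 1
  · rw [hQsum p, Finset.smul_sum]
    exact Finset.sum_congr rfl fun k hk => by
      rw [hfq k (Finset.mem_filter.mp hk).2]
  · rw [hNsum p, Finset.smul_sum]
    exact Finset.sum_congr rfl fun k hk => by
      rw [hfn k (Finset.mem_filter.mp hk).2]

lemma hQQid (hp12 : p % 12 = 11) :
    Qpoly p * Qpoly p
      = (3*((p+1)/12) - 1) • Qpoly p + (3*((p+1)/12)) • Npoly p := by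
  classical
  conv_lhs => rw [hQsum p, sum_mul_sum_fiber p]
  rw [sum_count p 0 (3*((p+1)/12) - 1) (3*((p+1)/12)) _ ?_ ?_ ?_, zero_smul, zero_add]
  · rw [fiber_card p 1 1 0, count_QQ0 p hp12]
  · intro k hk
    have hk0 : k ≠ 0 := fun h0 => by rw [h0, quadraticChar_zero] at hk; norm_num at hk
    rw [fiber_card p 1 1 k, count_QQ p hp12 k hk0, if_pos hk]
  · intro k hk
    have hk0 : k ≠ 0 := fun h0 => by rw [h0, quadraticChar_zero] at hk; norm_num at hk
    rw [fiber_card p 1 1 k, count_QQ p hp12 k hk0, if_neg (by rw [hk]; norm_num)]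

lemma hNNid (hp12 : p % 12 = 11) :
    Npoly p * Npoly p
      = (3*((p+1)/12)) • Qpoly p + (3*((p+1)/12) - 1) • Npoly p := by
  classical
  conv_lhs => rw [hNsum p, sum_mul_sum_fiber p]
  rw [sum_count p 0 (3*((p+1)/12)) (3*((p+1)/12) - 1) _ ?_ ?_ ?_, zero_smul, zero_add]
  · rw [fiber_card p (-1) (-1) 0, count_NN0 p hp12]
  · intro k hk
    have hk0 : k ≠ 0 := fun h0 => by rw [h0, quadraticChar_zero] at hk; norm_num at hk
    rw [fiber_card p (-1) (-1) k, count_NN p hp12 k hk0, if_pos hk]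
  · intro k hk
    have hk0 : k ≠ 0 := fun h0 => by rw [h0, quadraticChar_zero] at hk; norm_num at hk
    rw [fiber_card p (-1) (-1) k, count_NN p hp12 k hk0, if_neg (by rw [hk]; norm_num)]

lemma hQNid (hp12 : p % 12 = 11) :
    Qpoly p * Npoly p
      = (6*((p+1)/12) - 1) • (1 : Rn p)
        + ((3*((p+1)/12) - 1) • Qpoly p + (3*((p+1)/12) - 1) • Npoly p) := by
  classical
  conv_lhs => rw [hQsum p, hNsum p, sum_mul_sum_fiber p]
  rw [sum_count p (6*((p+1)/12) - 1) (3*((p+1)/12) - 1) (3*((p+1)/12) - 1) _ ?_ ?_ ?_]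
  · rw [fiber_card p 1 (-1) 0, count_QN0 p hp12]
  · intro k hk
    have hk0 : k ≠ 0 := fun h0 => by rw [h0, quadraticChar_zero] at hk; norm_num at hk
    rw [fiber_card p 1 (-1) k, count_QN p hp12 k hk0]
  · intro k hk
    have hk0 : k ≠ 0 := fun h0 => by rw [h0, quadraticChar_zero] at hk; norm_num at hk
    rw [fiber_card p 1 (-1) k, count_QN p hp12 k hk0]

lemma hJid : Jel p = 1 + Qpoly p + Npoly p := by
  have h1 : ∑ k : ZMod p, xel p k = ∑ i ∈ Finset.range p, xbar p ^ i := by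
    refine Finset.sum_nbij' (fun k : ZMod p => k.val) (fun i => (i : ZMod p)) ?_ ?_ ?_ ?_ ?_
    · intro k _; exact Finset.mem_range.mpr (ZMod.val_lt k)
    · intro i _; exact Finset.mem_univ _
    · intro k _
      rw [ZMod.natCast_val, ZMod.cast_id]
    · intro i hi
      rw [ZMod.val_cast_of_lt (Finset.mem_range.mp hi)]
    · intro k _; rfl
  rw [Jel_xbar, ← h1, sum_split p (xel p), hxel_zero p, hQsum p, hNsum p, add_assoc]
end Main


section Tau
open Finset
variable (p : ℕ) [Fact p.Prime]
local notation "χ" => quadraticChar (ZMod p)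

def tauh (t : ZMod p) : Rn p →+* Rn p :=
  Ideal.Quotient.lift _ (Polynomial.eval₂RingHom (ofR p) (xel p t))
    (by
      intro a ha
      have h : Ideal.span {(X : Polynomial R9) ^ p - 1} ≤
          RingHom.ker (Polynomial.eval₂RingHom (ofR p) (xel p t)) := by
        rw [Ideal.span_le, Set.singleton_subset_iff]
        simp only [SetLike.mem_coe, RingHom.mem_ker, map_sub, map_pow, map_one,
          Polynomial.coe_eval₂RingHom, Polynomial.eval₂_X]
        rw [xel, ← pow_mul, Nat.mul_comm, pow_mul, xbar_pow_p p, one_pow (M := Rn p), sub_self]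
      exact h ha)

lemma tauh_ofR (t : ZMod p) (a : R9) : tauh p t (ofR p a) = ofR p a := by
  show Polynomial.eval₂RingHom (ofR p) (xel p t) (Polynomial.C a) = ofR p a
  simp [tauh, ofR, Ideal.Quotient.lift_mk]

lemma tauh_xbar (t : ZMod p) : tauh p t (xbar p) = xel p t := by
  show Polynomial.eval₂RingHom (ofR p) (xel p t) (X : Polynomial R9) = xel p t
  simp [tauh, xbar, Ideal.Quotient.lift_mk]

lemma tauh_xel (t i : ZMod p) : tauh p t (xel p i) = xel p (t * i) := by
  rw [xel, map_pow, tauh_xbar, xel, ← pow_mul, xbar_pow_mod p, xel, ← ZMod.val_mul]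

lemma tauh_comp (t s : ZMod p) : (tauh p t).comp (tauh p s) = tauh p (t * s) := by
  apply Ideal.Quotient.ringHom_ext
  apply Polynomial.ringHom_ext
  · intro a
    simp only [RingHom.comp_apply]
    have h1 : (Ideal.Quotient.mk _ (Polynomial.C a) : Rn p) = ofR p a := rfl
    rw [h1, tauh_ofR, tauh_ofR, tauh_ofR]
  · simp only [RingHom.comp_apply]
    have h1 : (Ideal.Quotient.mk _ (X : Polynomial R9) : Rn p) = xbar p := rfl
    rw [h1, tauh_xbar, tauh_xel, tauh_xbar, mul_comm]

lemma tauh_one : tauh p 1 = RingHom.id (Rn p) := by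
  apply Ideal.Quotient.ringHom_ext
  apply Polynomial.ringHom_ext
  · intro a
    simp only [RingHom.comp_apply, RingHom.id_apply]
    have h1 : (Ideal.Quotient.mk _ (Polynomial.C a) : Rn p) = ofR p a := rfl
    rw [h1, tauh_ofR]
  · simp only [RingHom.comp_apply, RingHom.id_apply]
    have h1 : (Ideal.Quotient.mk _ (X : Polynomial R9) : Rn p) = xbar p := rfl
    rw [h1, tauh_xbar, xel, ZMod.val_one_eq_one_mod]
    rw [← xbar_pow_mod p, pow_one]

lemma tauh_inv (t : ZMod p) (ht : t ≠ 0) (x : Rn p) : tauh p t⁻¹ (tauh p t x) = x := by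
  have h := RingHom.congr_fun (tauh_comp p t⁻¹ t) x
  simp only [RingHom.comp_apply] at h
  rw [h, inv_mul_cancel₀ ht, tauh_one]
  rfl

lemma tauh_inv' (t : ZMod p) (ht : t ≠ 0) (x : Rn p) : tauh p t (tauh p t⁻¹ x) = x := by
  have h := RingHom.congr_fun (tauh_comp p t t⁻¹) x
  simp only [RingHom.comp_apply] at h
  rw [h, mul_inv_cancel₀ ht, tauh_one]
  rfl

lemma card_span_tauh (t : ZMod p) (ht : t ≠ 0) (g : Rn p) :
    Nat.card (Ideal.span {tauh p t g} : Ideal (Rn p)) = Nat.card (Ideal.span {g} : Ideal (Rn p)) := by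
  symm
  apply Nat.card_congr
  refine ⟨fun z => ⟨tauh p t z.1, ?_⟩, fun w => ⟨tauh p t⁻¹ w.1, ?_⟩, ?_, ?_⟩
  · obtain ⟨c, hc⟩ := (Ideal.mem_span_singleton (α := Rn p)).mp z.2
    exact (Ideal.mem_span_singleton (α := Rn p)).mpr ⟨tauh p t c, by rw [hc, map_mul]⟩
  · obtain ⟨c, hc⟩ := (Ideal.mem_span_singleton (α := Rn p)).mp w.2
    refine (Ideal.mem_span_singleton (α := Rn p)).mpr ⟨tauh p t⁻¹ c, ?_⟩
    rw [hc, map_mul, tauh_inv p t ht]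
  · intro z; exact Subtype.ext (tauh_inv p t ht z.1)
  · intro w; exact Subtype.ext (tauh_inv' p t ht w.1)

lemma tauh_Q (t : ZMod p) (ht : χ t = -1) : tauh p t (Qpoly p) = Npoly p := by
  have ht0 : t ≠ 0 := fun h => by rw [h, quadraticChar_zero] at ht; norm_num at ht
  rw [hQsum p, map_sum, hNsum p]
  refine Finset.sum_nbij' (fun i => t * i) (fun j => t⁻¹ * j) ?_ ?_ ?_ ?_ ?_
  · intro i hi
    simp only [Finset.mem_filter, Finset.mem_univ, true_and] at hi ⊢
    rw [map_mul, ht, hi]; ring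
  · intro j hj
    simp only [Finset.mem_filter, Finset.mem_univ, true_and] at hj ⊢
    rw [map_mul, hχinv, ht, hj]; ring
  · intro i _; rw [← mul_assoc, inv_mul_cancel₀ ht0, one_mul]
  · intro j _; rw [← mul_assoc, mul_inv_cancel₀ ht0, one_mul]
  · intro i _; rw [tauh_xel]

lemma tauh_N (t : ZMod p) (ht : χ t = -1) : tauh p t (Npoly p) = Qpoly p := by
  have ht0 : t ≠ 0 := fun h => by rw [h, quadraticChar_zero] at ht; norm_num at ht
  rw [hQsum p, hNsum p, map_sum]
  refine Finset.sum_nbij' (fun i => t * i) (fun j => t⁻¹ * j) ?_ ?_ ?_ ?_ ?_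
  · intro i hi
    simp only [Finset.mem_filter, Finset.mem_univ, true_and] at hi ⊢
    rw [map_mul, ht, hi]; ring
  · intro j hj
    simp only [Finset.mem_filter, Finset.mem_univ, true_and] at hj ⊢
    rw [map_mul, hχinv, ht, hj]; ring
  · intro i _; rw [← mul_assoc, inv_mul_cancel₀ ht0, one_mul]
  · intro j _; rw [← mul_assoc, mul_inv_cancel₀ ht0, one_mul]
  · intro i _; rw [tauh_xel]

lemma tauh_uP (t : ZMod p) : tauh p t (uP p) = uP p := tauh_ofR p t uu

lemma tauh_E1 (t : ZMod p) (ht : χ t = -1) : tauh p t (E1gen p) = E2gen p := by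
  rw [E1gen, E2gen]
  split_ifs <;>
  · simp only [map_add, map_mul, map_sub, map_one, map_ofNat (tauh p t), tauh_uP,
      tauh_Q p t ht, tauh_N p t ht]

lemma tauh_D1 (t : ZMod p) (ht : χ t = -1) : tauh p t (D1gen p) = D2gen p := by
  rw [D1gen, D2gen]
  split_ifs <;>
  · simp only [map_add, map_mul, map_sub, map_one, map_ofNat (tauh p t), tauh_uP,
      tauh_Q p t ht, tauh_N p t ht]
end Tau



lemma huuidem : uu * uu = uu := by
  rw [uu, ← map_mul, Ideal.Quotient.mk_eq_mk_iff_sub_mem]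
  rw [← sq]
  exact Ideal.subset_span rfl

lemma hupidem (p : ℕ) : uP p * uP p = uP p := by
  rw [uP, ← map_mul, huuidem]

lemma cards_from_data (p : ℕ) [Fact p.Prime] (hp12 : p % 12 = 11) (c0 : R9) (hc0 : IsUnit c0)
    (hE1idem : E1gen p * E1gen p = E1gen p)
    (hsplit : D1gen p = E1gen p + ofR p c0 * Jel p)
    (hcJ : (ofR p c0 * Jel p) * (ofR p c0 * Jel p) = ofR p c0 * Jel p)
    (horth : E1gen p * (ofR p c0 * Jel p) = 0)
    (hcomp : (1 : Rn p) - D1gen p = E2gen p) :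
    Nat.card ↥(Ideal.span {D1gen p}) = 9 ^ (p + 1) ∧
    Nat.card ↥(Ideal.span {D2gen p}) = 9 ^ (p + 1) ∧
    Nat.card ↥(Ideal.span {E1gen p}) = 9 ^ (p - 1) ∧
    Nat.card ↥(Ideal.span {E2gen p}) = 9 ^ (p - 1) := by
  have hp0 : p ≠ 0 := fun h => by omega
  obtain ⟨t, ht⟩ := quadraticChar_exists_neg_one (F := ZMod p) (hchar2 p hp12)
  have ht0 : t ≠ 0 := fun h => by rw [h, quadraticChar_zero] at ht; norm_num at ht
  have hE : Nat.card ↥(Ideal.span {E2gen p}) = Nat.card ↥(Ideal.span {E1gen p}) := by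
    rw [← tauh_E1 p t ht]
    exact card_span_tauh p t ht0 _
  have hD : Nat.card ↥(Ideal.span {D2gen p}) = Nat.card ↥(Ideal.span {D1gen p}) := by
    rw [← tauh_D1 p t ht]
    exact card_span_tauh p t ht0 _
  have hD1idem : D1gen p * D1gen p = D1gen p := by
    rw [hsplit]
    linear_combination hE1idem + hcJ + 2 * horth
  have htot : Nat.card ↥(Ideal.span {D1gen p}) * Nat.card ↥(Ideal.span {E2gen p}) = 81 ^ p := by
    have h := card_span_idem_mul (A := Rn p) hD1idem
    rw [hcomp, Rncard p hp0] at h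
    exact h
  have hsplitc : Nat.card ↥(Ideal.span {D1gen p}) = Nat.card ↥(Ideal.span {E1gen p}) * 81 := by
    rw [hsplit, card_span_add_of_orth (A := Rn p) hE1idem hcJ horth, card_span_cJ p hp0 c0 hc0]
  have hm : Nat.card ↥(Ideal.span {E1gen p}) = 9 ^ (p - 1) := by
    have h81 : 81 ^ p = 81 * ((9:ℕ) ^ (p - 1) * 9 ^ (p-1)) := by
      rw [show (81:ℕ) = 9^2 by norm_num, ← pow_mul, ← pow_add, ← pow_add]
      congr 1
      omega
    rw [hsplitc, hE] at htot
    rw [h81] at htot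
    have h2 : Nat.card ↥(Ideal.span {E1gen p}) * Nat.card ↥(Ideal.span {E1gen p})
        = 9 ^ (p-1) * 9 ^ (p-1) := by
      apply Nat.eq_of_mul_eq_mul_left (show 0 < 81 by norm_num)
      rw [← htot]
      ring
    exact Nat.mul_self_inj.mp h2
  have hD1c : Nat.card ↥(Ideal.span {D1gen p}) = 9 ^ (p + 1) := by
    rw [hsplitc, hm, show (81:ℕ) = 9^2 by norm_num, ← pow_add]
    congr 1
    omega
  exact ⟨hD1c, by rw [hD, hD1c], hm, by rw [hE, hm]⟩

theorem stmt17 (p : ℕ) [Fact p.Prime] (hp12 : p % 12 = 11) :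
    Nat.card ↥(Ideal.span {D1gen p}) = 9 ^ (p + 1) ∧
    Nat.card ↥(Ideal.span {D2gen p}) = 9 ^ (p + 1) ∧
    Nat.card ↥(Ideal.span {E1gen p}) = 9 ^ (p - 1) ∧
    Nat.card ↥(Ideal.span {E2gen p}) = 9 ^ (p - 1) := by
  have h9 := h9Rn p
  have hu := hupidem p
  have hJ := hJid p
  have h3 : (p+1)/12 % 3 = 0 ∨ (p+1)/12 % 3 = 1 ∨ (p+1)/12 % 3 = 2 := by omega
  rcases h3 with hc | hc | hc
  · -- branch r % 3 = 0
    obtain ⟨s, hs⟩ : ∃ s, (p+1)/12 = 3*s + 3 := ⟨((p+1)/12 - 3)/3, by omega⟩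
    have e1 := hQQid p hp12
    have e2 := hNNid p hp12
    have e3 := hQNid p hp12
    rw [hs, show 3*(3*s+3) - 1 = 9*s + 8 from by omega,
      show 3*(3*s+3) = 9*s + 9 from by omega,
      nsmul_eq_mul (α := Rn p), nsmul_eq_mul (α := Rn p)] at e1
    push_cast at e1
    rw [hs, show 3*(3*s+3) - 1 = 9*s + 8 from by omega,
      show 3*(3*s+3) = 9*s + 9 from by omega,
      nsmul_eq_mul (α := Rn p), nsmul_eq_mul (α := Rn p)] at e2
    push_cast at e2
    rw [hs, show 6*(3*s+3) - 1 = 18*s + 17 from by omega,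
      show 3*(3*s+3) - 1 = 9*s + 8 from by omega,
      nsmul_eq_mul (α := Rn p), nsmul_eq_mul (α := Rn p), nsmul_eq_mul (α := Rn p)] at e3
    push_cast at e3
    have hQ2 : Qpoly p * Qpoly p = 8 * Qpoly p + 0 * Npoly p := by
      linear_combination e1 + ((s:Rn p) * Qpoly p + ((s:Rn p)+1) * Npoly p) * h9
    have hN2 : Npoly p * Npoly p = 0 * Qpoly p + 8 * Npoly p := by
      linear_combination e2 + (((s:Rn p)+1) * Qpoly p + (s:Rn p) * Npoly p) * h9
    have hQN : Qpoly p * Npoly p = 8 + 8 * Qpoly p + 8 * Npoly p := by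
      linear_combination e3 + ((2*(s:Rn p)+1) + (s:Rn p) * Qpoly p + (s:Rn p) * Npoly p) * h9
    have hD1e : D1gen p = uP p * (8 * Qpoly p) + (1 - uP p) * (8 * Npoly p) := by
      simp only [D1gen]; rw [if_pos hc]
    have hE1e : E1gen p = uP p * (1 + Npoly p) + (1 - uP p) * (1 + Qpoly p) := by
      simp only [E1gen]; rw [if_pos hc]
    have hE2e : E2gen p = uP p * (1 + Qpoly p) + (1 - uP p) * (1 + Npoly p) := by
      simp only [E2gen]; rw [if_pos hc]
    have hcu : IsUnit (8 : R9) := IsUnit.of_mul_eq_one 8 (by linear_combination (7 : R9) * h9R9)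
    have hcR : ofR p (8 : R9) = (8 : Rn p) := map_ofNat (ofR p) 8
    have hE1idem : E1gen p * E1gen p = E1gen p := by
      rw [hE1e]
      linear_combination ((1) + (-1)*(uP p)) * hQ2 + ((1)*(uP p)) * hN2 + ((1)*(Npoly p)^2 + (-2)*(Qpoly p)*(Npoly p) + (1)*(Qpoly p)^2) * hu + ((1)*(Qpoly p) + (1)*(uP p)*(Npoly p) + (-1)*(uP p)*(Qpoly p)) * h9
    have hsplit : D1gen p = E1gen p + ofR p (8 : R9) * Jel p := by
      rw [hD1e, hE1e, hcR]
      linear_combination ((-8)) * hJ + ((-1) + (-1)*(Qpoly p) + (-1)*(uP p)*(Npoly p) + (1)*(uP p)*(Qpoly p)) * h9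
    have hcJ : (ofR p (8 : R9) * Jel p) * (ofR p (8 : R9) * Jel p) = ofR p (8 : R9) * Jel p := by
      rw [hcR]
      linear_combination ((64)) * hQ2 + ((64)) * hN2 + ((128)) * hQN + ((56) + (64)*(Jel p) + (64)*(Npoly p) + (64)*(Qpoly p)) * hJ + ((120) + (184)*(Npoly p) + (184)*(Qpoly p)) * h9
    have horth : E1gen p * (ofR p (8 : R9) * Jel p) = 0 := by
      rw [hE1e, hcR]
      linear_combination ((8) + (-8)*(uP p)) * hQ2 + ((8)*(uP p)) * hN2 + ((8)) * hQN + ((8) + (8)*(Qpoly p) + (8)*(uP p)*(Npoly p) + (-8)*(uP p)*(Qpoly p)) * hJ + ((8) + (8)*(Npoly p) + (16)*(Qpoly p) + (8)*(uP p)*(Npoly p) + (-8)*(uP p)*(Qpoly p)) * h9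
    have hcomp : (1 : Rn p) - D1gen p = E2gen p := by
      rw [hD1e, hE2e]
      linear_combination ((-1)*(Npoly p) + (1)*(uP p)*(Npoly p) + (-1)*(uP p)*(Qpoly p)) * h9
    exact cards_from_data p hp12 _ hcu hE1idem hsplit hcJ horth hcomp
  · -- branch r % 3 = 1
    obtain ⟨s, hs⟩ : ∃ s, (p+1)/12 = 3*s + 1 := ⟨((p+1)/12 - 1)/3, by omega⟩
    have e1 := hQQid p hp12
    have e2 := hNNid p hp12
    have e3 := hQNid p hp12
    rw [hs, show 3*(3*s+1) - 1 = 9*s + 2 from by omega,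
      show 3*(3*s+1) = 9*s + 3 from by omega,
      nsmul_eq_mul (α := Rn p), nsmul_eq_mul (α := Rn p)] at e1
    push_cast at e1
    rw [hs, show 3*(3*s+1) - 1 = 9*s + 2 from by omega,
      show 3*(3*s+1) = 9*s + 3 from by omega,
      nsmul_eq_mul (α := Rn p), nsmul_eq_mul (α := Rn p)] at e2
    push_cast at e2
    rw [hs, show 6*(3*s+1) - 1 = 18*s + 5 from by omega,
      show 3*(3*s+1) - 1 = 9*s + 2 from by omega,
      nsmul_eq_mul (α := Rn p), nsmul_eq_mul (α := Rn p), nsmul_eq_mul (α := Rn p)] at e3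
    push_cast at e3
    have hQ2 : Qpoly p * Qpoly p = 2 * Qpoly p + 3 * Npoly p := by
      linear_combination e1 + ((s:Rn p) * Qpoly p + (s:Rn p) * Npoly p) * h9
    have hN2 : Npoly p * Npoly p = 3 * Qpoly p + 2 * Npoly p := by
      linear_combination e2 + ((s:Rn p) * Qpoly p + (s:Rn p) * Npoly p) * h9
    have hQN : Qpoly p * Npoly p = 5 + 2 * Qpoly p + 2 * Npoly p := by
      linear_combination e3 + ((2*(s:Rn p)) + (s:Rn p) * Qpoly p + (s:Rn p) * Npoly p) * h9
    have hD1e : D1gen p = uP p * (3 + 6 * Qpoly p + 8 * Npoly p) + (1 - uP p) * (3 + 6 * Npoly p + 8 * Qpoly p) := by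
      simp only [D1gen]; rw [if_neg (by omega), if_pos hc]
    have hE1e : E1gen p = uP p * (7 + Qpoly p + 3 * Npoly p) + (1 - uP p) * (7 + Npoly p + 3 * Qpoly p) := by
      simp only [E1gen]; rw [if_neg (by omega), if_pos hc]
    have hE2e : E2gen p = uP p * (7 + Npoly p + 3 * Qpoly p) + (1 - uP p) * (7 + Qpoly p + 3 * Npoly p) := by
      simp only [E2gen]; rw [if_neg (by omega), if_pos hc]
    have hcu : IsUnit (5 : R9) := IsUnit.of_mul_eq_one 2 (by linear_combination (1 : R9) * h9R9)
    have hcR : ofR p (5 : R9) = (5 : Rn p) := map_ofNat (ofR p) 5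
    have hE1idem : E1gen p * E1gen p = E1gen p := by
      rw [hE1e]
      linear_combination ((9) + (-8)*(uP p)) * hQ2 + ((1) + (8)*(uP p)) * hN2 + ((6)) * hQN + ((4)*(Npoly p)^2 + (-8)*(Qpoly p)*(Npoly p) + (4)*(Qpoly p)^2) * hu + ((8) + (6)*(Npoly p) + (8)*(Qpoly p) + (2)*(uP p)*(Npoly p) + (-2)*(uP p)*(Qpoly p)) * h9
    have hsplit : D1gen p = E1gen p + ofR p (5 : R9) * Jel p := by
      rw [hD1e, hE1e, hcR]
      linear_combination ((-5)) * hJ + ((-1)) * h9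
    have hcJ : (ofR p (5 : R9) * Jel p) * (ofR p (5 : R9) * Jel p) = ofR p (5 : R9) * Jel p := by
      rw [hcR]
      linear_combination ((25)) * hQ2 + ((25)) * hN2 + ((50)) * hQN + ((20) + (25)*(Jel p) + (25)*(Npoly p) + (25)*(Qpoly p)) * hJ + ((30) + (30)*(Npoly p) + (30)*(Qpoly p)) * h9
    have horth : E1gen p * (ofR p (5 : R9) * Jel p) = 0 := by
      rw [hE1e, hcR]
      linear_combination ((15) + (-10)*(uP p)) * hQ2 + ((5) + (10)*(uP p)) * hN2 + ((20)) * hQN + ((35) + (5)*(Npoly p) + (15)*(Qpoly p) + (10)*(uP p)*(Npoly p) + (-10)*(uP p)*(Qpoly p)) * hJ + ((15) + (15)*(Npoly p) + (15)*(Qpoly p)) * h9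
    have hcomp : (1 : Rn p) - D1gen p = E2gen p := by
      rw [hD1e, hE2e]
      linear_combination ((-1) + (-1)*(Npoly p) + (-1)*(Qpoly p)) * h9
    exact cards_from_data p hp12 _ hcu hE1idem hsplit hcJ horth hcomp
  · -- branch r % 3 = 2
    obtain ⟨s, hs⟩ : ∃ s, (p+1)/12 = 3*s + 2 := ⟨((p+1)/12 - 2)/3, by omega⟩
    have e1 := hQQid p hp12
    have e2 := hNNid p hp12
    have e3 := hQNid p hp12
    rw [hs, show 3*(3*s+2) - 1 = 9*s + 5 from by omega,
      show 3*(3*s+2) = 9*s + 6 from by omega,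
      nsmul_eq_mul (α := Rn p), nsmul_eq_mul (α := Rn p)] at e1
    push_cast at e1
    rw [hs, show 3*(3*s+2) - 1 = 9*s + 5 from by omega,
      show 3*(3*s+2) = 9*s + 6 from by omega,
      nsmul_eq_mul (α := Rn p), nsmul_eq_mul (α := Rn p)] at e2
    push_cast at e2
    rw [hs, show 6*(3*s+2) - 1 = 18*s + 11 from by omega,
      show 3*(3*s+2) - 1 = 9*s + 5 from by omega,
      nsmul_eq_mul (α := Rn p), nsmul_eq_mul (α := Rn p), nsmul_eq_mul (α := Rn p)] at e3
    push_cast at e3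
    have hQ2 : Qpoly p * Qpoly p = 5 * Qpoly p + 6 * Npoly p := by
      linear_combination e1 + ((s:Rn p) * Qpoly p + (s:Rn p) * Npoly p) * h9
    have hN2 : Npoly p * Npoly p = 6 * Qpoly p + 5 * Npoly p := by
      linear_combination e2 + ((s:Rn p) * Qpoly p + (s:Rn p) * Npoly p) * h9
    have hQN : Qpoly p * Npoly p = 2 + 5 * Qpoly p + 5 * Npoly p := by
      linear_combination e3 + ((2*(s:Rn p)+1) + (s:Rn p) * Qpoly p + (s:Rn p) * Npoly p) * h9
    have hD1e : D1gen p = uP p * (6 + 3 * Qpoly p + 8 * Npoly p) + (1 - uP p) * (6 + 3 * Npoly p + 8 * Qpoly p) := by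
      simp only [D1gen]; rw [if_neg (by omega), if_neg (by omega)]
    have hE1e : E1gen p = uP p * (4 + Qpoly p + 6 * Npoly p) + (1 - uP p) * (4 + Npoly p + 6 * Qpoly p) := by
      simp only [E1gen]; rw [if_neg (by omega), if_neg (by omega)]
    have hE2e : E2gen p = uP p * (4 + Npoly p + 6 * Qpoly p) + (1 - uP p) * (4 + Qpoly p + 6 * Npoly p) := by
      simp only [E2gen]; rw [if_neg (by omega), if_neg (by omega)]
    have hcu : IsUnit (2 : R9) := IsUnit.of_mul_eq_one 5 (by linear_combination (1 : R9) * h9R9)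
    have hcR : ofR p (2 : R9) = (2 : Rn p) := map_ofNat (ofR p) 2
    have hE1idem : E1gen p * E1gen p = E1gen p := by
      rw [hE1e]
      linear_combination ((36) + (-35)*(uP p)) * hQ2 + ((1) + (35)*(uP p)) * hN2 + ((12)) * hQN + ((25)*(Npoly p)^2 + (-50)*(Qpoly p)*(Npoly p) + (25)*(Qpoly p)^2) * hu + ((4) + (32)*(Npoly p) + (32)*(Qpoly p)) * h9
    have hsplit : D1gen p = E1gen p + ofR p (2 : R9) * Jel p := by
      rw [hD1e, hE1e, hcR]
      linear_combination ((-2)) * hJ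
    have hcJ : (ofR p (2 : R9) * Jel p) * (ofR p (2 : R9) * Jel p) = ofR p (2 : R9) * Jel p := by
      rw [hcR]
      linear_combination ((4)) * hQ2 + ((4)) * hN2 + ((8)) * hQN + ((2) + (4)*(Jel p) + (4)*(Npoly p) + (4)*(Qpoly p)) * hJ + ((2) + (10)*(Npoly p) + (10)*(Qpoly p)) * h9
    have horth : E1gen p * (ofR p (2 : R9) * Jel p) = 0 := by
      rw [hE1e, hcR]
      linear_combination ((12) + (-10)*(uP p)) * hQ2 + ((2) + (10)*(uP p)) * hN2 + ((14)) * hQN + ((8) + (2)*(Npoly p) + (12)*(Qpoly p) + (10)*(uP p)*(Npoly p) + (-10)*(uP p)*(Qpoly p)) * hJ + ((4) + (18)*(Npoly p) + (18)*(Qpoly p)) * h9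
    have hcomp : (1 : Rn p) - D1gen p = E2gen p := by
      rw [hD1e, hE2e]
      linear_combination ((-1) + (-1)*(Npoly p) + (-1)*(Qpoly p)) * h9
    exact cards_from_data p hp12 _ hcu hE1idem hsplit hcJ horth hcomp
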